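/- Let q be a prime, k ≥ 2, r ≥ 2^{k+1}, and let χ_α be a nontrivial additive character of F_q. For any functions f_1,…,f_k where f_i: (F_q^r)^k → {0,1} does not depend on the i-th argument, the quantity γ := |E_{(x_1,…,x_k)}[∏_i f_i(x_1,…,x_k) · χ_α(GIP(x_1,…,x_k))]| satisfies γ^{2^{k−1}} ≤ (2k/q)^r. -/

import Mathlib

set_option maxHeartbeats 1000000

open Finset
open scoped BigOperators



-- helper: expectation over a pi type of a product of coordinate functions
lemma expect_pi_prod {ι A K : Type*} [Fintype ι] [DecidableEq ι] [Fintype A] [Nonempty A]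
    [RCLike K] (g : ι → A → K) :
    𝔼 x : ι → A, ∏ j, g j (x j) = ∏ j, 𝔼 a : A, g j a := by
  simp only [Fintype.expect_eq_sum_div_card]
  rw [← Fintype.piFinset_univ, ← Finset.prod_univ_sum, Finset.prod_div_distrib]
  congr 1
  simp [Fintype.card_fun]

lemma expect_prod_type {ι κ K : Type*} [Fintype ι] [Fintype κ] [RCLike K] (f : ι × κ → K) :
    𝔼 x : ι × κ, f x = 𝔼 i : ι, 𝔼 j : κ, f (i, j) := by
  rw [← Finset.univ_product_univ, Finset.expect_product]

lemma addChar_map_sum {A M : Type*} [AddCommMonoid A] [CommMonoid M] (χ : AddChar A M)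
    {ι : Type*} (s : Finset ι) (g : ι → A) :
    χ (∑ i ∈ s, g i) = ∏ i ∈ s, χ (g i) := by
  induction s using Finset.cons_induction with
  | empty => simp
  | cons a s ha ih => rw [Finset.sum_cons, Finset.prod_cons, AddChar.map_add_eq_mul, ih]

noncomputable def Dfun (q : ℕ) [NeZero q] : ℕ → ZMod q → ℝ
  | 0, c => if c = 0 then 1 else 0
  | (m+1), c => 𝔼 p : ZMod q × ZMod q, Dfun q m (c * (p.1 - p.2))

lemma Dfun_nonneg (q : ℕ) [NeZero q] : ∀ m (c : ZMod q), 0 ≤ Dfun q m c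
  | 0, c => by unfold Dfun; positivity
  | (m+1), c => Finset.expect_nonneg fun p _ => Dfun_nonneg q m _

lemma Dfun_le_one (q : ℕ) [NeZero q] : ∀ m (c : ZMod q), Dfun q m c ≤ 1
  | 0, c => by unfold Dfun; split <;> norm_num
  | (m+1), c => by
      unfold Dfun
      calc 𝔼 p : ZMod q × ZMod q, Dfun q m (c * (p.1 - p.2))
          ≤ 𝔼 _p : ZMod q × ZMod q, (1:ℝ) :=
            Finset.expect_le_expect fun p _ => Dfun_le_one q m _
        _ = 1 := Fintype.expect_const 1

lemma Dfun_le (q : ℕ) [Fact q.Prime] : ∀ m (c : ZMod q), c ≠ 0 → Dfun q m c ≤ m / q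
  | 0, c, hc => by unfold Dfun; simp [hc]
  | (m+1), c, hc => by
      unfold Dfun
      have hq : (0:ℝ) < q := by
        have := Fact.out (p := q.Prime); exact_mod_cast this.pos
      calc 𝔼 p : ZMod q × ZMod q, Dfun q m (c * (p.1 - p.2))
          ≤ 𝔼 p : ZMod q × ZMod q, ((if p.1 = p.2 then (1:ℝ) else 0) + m / q) := by
            refine Finset.expect_le_expect fun p _ => ?_
            by_cases h : p.1 = p.2
            · rw [if_pos h]
              have h1 : Dfun q m (c * (p.1 - p.2)) ≤ 1 := Dfun_le_one q m _
              have h2 : (0:ℝ) ≤ m / q := by positivity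
              linarith
            · rw [if_neg h, zero_add]
              exact Dfun_le q m _ (mul_ne_zero hc (sub_ne_zero_of_ne h))
        _ = (𝔼 p : ZMod q × ZMod q, (if p.1 = p.2 then (1:ℝ) else 0)) + m / q := by
            rw [Finset.expect_add_distrib]
            congr 1
            exact Fintype.expect_const _
        _ = 1 / q + m / q := by
            congr 1
            rw [Fintype.expect_eq_sum_div_card]
            have : ∑ p : ZMod q × ZMod q, (if p.1 = p.2 then (1:ℝ) else 0) = q := by
              rw [Fintype.sum_prod_type]
              simp [Finset.sum_ite_eq, ZMod.card q]
            rw [this, Fintype.card_prod, ZMod.card q]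
            push_cast
            field_simp
        _ = (↑(m+1)) / q := by push_cast; ring

lemma expect_char (q : ℕ) [Fact q.Prime] [NeZero q] {χ : AddChar (ZMod q) ℂ} (hχ : χ ≠ 1)
    (c : ZMod q) : 𝔼 t : ZMod q, χ (c * t) = if c = 0 then 1 else 0 := by
  split
  · next h => simp [h, AddChar.map_zero_eq_one, Fintype.expect_const]
  · next h =>
    rw [Fintype.expect_eq_sum_div_card]
    have : ∑ t : ZMod q, χ (c * t) = ∑ u : ZMod q, χ u :=
      Fintype.sum_equiv (Equiv.mulLeft₀ c h) _ _ (fun t => rfl)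
    rw [this, AddChar.sum_eq_zero_of_ne_one hχ, zero_div]



lemma expect_pow_le {ι : Type*} [Fintype ι] [Nonempty ι] {f : ι → ℝ} (hf : ∀ i, 0 ≤ f i)
    (n : ℕ) : (𝔼 i, f i) ^ (n + 1) ≤ 𝔼 i, f i ^ (n + 1) := by
  simp only [Fintype.expect_eq_sum_div_card]
  rw [div_pow]
  have h := pow_sum_div_card_le_sum_pow (s := Finset.univ) (f := f) (fun i _ => hf i) n
  rw [Finset.card_univ] at h
  calc (∑ i, f i) ^ (n+1) / (Fintype.card ι : ℝ) ^ (n+1)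
      ≤ (∑ i, f i) ^ (n+1) / (Fintype.card ι : ℝ) ^ n / (Fintype.card ι : ℝ) := by
        rw [div_div, ← pow_succ]
    _ ≤ (∑ i, f i ^ (n+1)) / (Fintype.card ι : ℝ) := by gcongr

lemma expect_pow_le' {ι : Type*} [Fintype ι] [Nonempty ι] {f : ι → ℝ} (hf : ∀ i, 0 ≤ f i)
    {n : ℕ} (hn : n ≠ 0) : (𝔼 i, f i) ^ n ≤ 𝔼 i, f i ^ n := by
  obtain ⟨n, rfl⟩ := Nat.exists_eq_succ_of_ne_zero hn
  exact expect_pow_le hf n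

lemma conj_expect {ι : Type*} [Fintype ι] (f : ι → ℂ) :
    (starRingEnd ℂ) (𝔼 i, f i) = 𝔼 i, (starRingEnd ℂ) (f i) := by
  simp_rw [Fintype.expect_eq_sum_div_card, map_div₀, map_sum, map_natCast]

lemma coe_expect_real {ι : Type*} [Fintype ι] (f : ι → ℝ) :
    ((𝔼 i, f i : ℝ) : ℂ) = 𝔼 i, ((f i : ℝ) : ℂ) := by
  simp_rw [Fintype.expect_eq_sum_div_card]
  push_cast
  rfl

lemma cs_step {V W : Type*} [Fintype V] [Fintype W] [Nonempty V] [Nonempty W]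
    (h : W → ℝ) (hh : ∀ y, 0 ≤ h y ∧ h y ≤ 1) (g : V → W → ℂ) :
    ‖𝔼 a : V, 𝔼 y : W, ((h y : ℝ) : ℂ) * g a y‖ ^ 2
      ≤ 𝔼 a : V, 𝔼 a' : V, ‖𝔼 y : W, g a y * (starRingEnd ℂ) (g a' y)‖ := by
  have hswap : (𝔼 a : V, 𝔼 y : W, ((h y : ℝ) : ℂ) * g a y)
      = 𝔼 y : W, ((h y : ℝ) : ℂ) * 𝔼 a : V, g a y := by
    rw [Finset.expect_comm]
    exact Finset.expect_congr rfl fun y _ => (Finset.mul_expect _ _ _).symm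
  rw [hswap]
  have step_a : ‖𝔼 y : W, ((h y : ℝ) : ℂ) * 𝔼 a : V, g a y‖
      ≤ 𝔼 y : W, ‖𝔼 a : V, g a y‖ := by
    refine (RCLike.norm_expect_le (K := ℂ)).trans (Finset.expect_le_expect fun y _ => ?_)
    rw [norm_mul, Complex.norm_real]
    refine mul_le_of_le_one_left (norm_nonneg _) ?_
    rw [Real.norm_of_nonneg (hh y).1]
    exact (hh y).2
  have step_b : ‖𝔼 y : W, ((h y : ℝ) : ℂ) * 𝔼 a : V, g a y‖ ^ 2
      ≤ 𝔼 y : W, ‖𝔼 a : V, g a y‖ ^ 2 := by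
    calc ‖𝔼 y : W, ((h y : ℝ) : ℂ) * 𝔼 a : V, g a y‖ ^ 2
        ≤ (𝔼 y : W, ‖𝔼 a : V, g a y‖) ^ 2 :=
          pow_le_pow_left₀ (norm_nonneg _) step_a 2
      _ ≤ 𝔼 y : W, ‖𝔼 a : V, g a y‖ ^ 2 :=
          expect_pow_le' (fun y => norm_nonneg _) two_ne_zero
  refine step_b.trans ?_
  have key : (𝔼 y : W, ‖𝔼 a : V, g a y‖ ^ 2 : ℝ)
      = ‖𝔼 a : V, 𝔼 a' : V, 𝔼 y : W, g a y * (starRingEnd ℂ) (g a' y)‖ := by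
    have hzz : ∀ y : W, ((‖𝔼 a : V, g a y‖ ^ 2 : ℝ) : ℂ)
        = 𝔼 a : V, 𝔼 a' : V, g a y * (starRingEnd ℂ) (g a' y) := by
      intro y
      rw [← Finset.expect_mul_expect, ← conj_expect]
      rw [Complex.mul_conj, Complex.sq_norm]
    have h1 : ((𝔼 y : W, ‖𝔼 a : V, g a y‖ ^ 2 : ℝ) : ℂ)
        = 𝔼 a : V, 𝔼 a' : V, 𝔼 y : W, g a y * (starRingEnd ℂ) (g a' y) := by
      rw [coe_expect_real]
      rw [Finset.expect_congr rfl fun y _ => hzz y]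
      rw [Finset.expect_comm]
      exact Finset.expect_congr rfl fun a _ => Finset.expect_comm _ _ _
    have h2 : (0:ℝ) ≤ 𝔼 y : W, ‖𝔼 a : V, g a y‖ ^ 2 :=
      Finset.expect_nonneg fun y _ => sq_nonneg _
    rw [← h1, Complex.norm_real, Real.norm_of_nonneg h2]
  rw [key]
  exact (RCLike.norm_expect_le (K := ℂ)).trans (Finset.expect_le_expect fun a _ => RCLike.norm_expect_le (K := ℂ))


section
variable {q r : ℕ} [Fact q.Prime] [NeZero q]

lemma key_base (χ : AddChar (ZMod q) ℂ) (hχ : χ ≠ 1)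
    (f : Fin 1 → (Fin 1 → Fin r → ZMod q) → ℝ)
    (hval : ∀ i x, 0 ≤ f i x ∧ f i x ≤ 1)
    (hcyl : ∀ i x x', (∀ j, j ≠ i → x j = x' j) → f i x = f i x')
    (w : Fin r → ZMod q) :
    ‖𝔼 x : Fin 1 → Fin r → ZMod q,
        (∏ i, (f i x : ℂ)) * χ (∑ j, w j * ∏ i, x i j)‖ ^ (2^0)
      ≤ ∏ j, Dfun q 0 (w j) := by
  have hconst : ∀ x, f 0 x = f 0 (fun _ _ => 0) := by
    intro x
    exact hcyl 0 x _ (fun j hj => absurd (Subsingleton.elim j 0) hj)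
  have h1 : (𝔼 x : Fin 1 → Fin r → ZMod q, (∏ i, (f i x : ℂ)) * χ (∑ j, w j * ∏ i, x i j))
      = 𝔼 v : Fin r → ZMod q, ((f 0 (fun _ _ => 0) : ℝ) : ℂ) * χ (∑ j, w j * v j) := by
    refine Fintype.expect_equiv (Equiv.funUnique (Fin 1) (Fin r → ZMod q)) _ _ (fun x => ?_)
    simp only [Fin.prod_univ_one]
    rw [hconst x]
    simp [Equiv.funUnique]
  rw [h1, ← Finset.mul_expect]
  have h2 : (𝔼 v : Fin r → ZMod q, χ (∑ j, w j * v j))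
      = ∏ j, (if w j = 0 then (1:ℂ) else 0) := by
    calc 𝔼 v : Fin r → ZMod q, χ (∑ j, w j * v j)
        = 𝔼 v : Fin r → ZMod q, ∏ j, χ (w j * v j) := by
          refine Finset.expect_congr rfl (fun v _ => ?_)
          exact addChar_map_sum χ univ _
      _ = ∏ j, 𝔼 t : ZMod q, χ (w j * t) := expect_pi_prod (fun j t => χ (w j * t))
      _ = ∏ j, (if w j = 0 then (1:ℂ) else 0) := by
          refine Finset.prod_congr rfl (fun j _ => ?_)
          rw [expect_char q hχ]
  rw [h2, pow_zero, pow_one]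
  have h3 : ∏ j, (if w j = 0 then (1:ℂ) else 0)
      = (((∏ j, if w j = 0 then (1:ℝ) else 0) : ℝ) : ℂ) := by
    push_cast
    exact Finset.prod_congr rfl (fun j _ => by split <;> simp)
  rw [h3, norm_mul]
  have h4 : ∏ j, Dfun q 0 (w j) = ∏ j, (if w j = 0 then (1:ℝ) else 0) := rfl
  rw [h4]
  have hP : (0:ℝ) ≤ ∏ j, (if w j = 0 then (1:ℝ) else 0) :=
    Finset.prod_nonneg (fun j _ => by split <;> norm_num)
  rw [Complex.norm_real, Complex.norm_real, Real.norm_of_nonneg hP]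
  calc ‖f 0 (fun _ _ => 0)‖ * (∏ j, if w j = 0 then (1:ℝ) else 0)
      ≤ 1 * (∏ j, if w j = 0 then (1:ℝ) else 0) := by
        apply mul_le_mul_of_nonneg_right _ hP
        rw [Real.norm_of_nonneg (hval 0 _).1]
        exact (hval 0 _).2
    _ = _ := one_mul _


lemma key_step (χ : AddChar (ZMod q) ℂ) (m : ℕ)
    (ih : ∀ (f : Fin (m+1) → (Fin (m+1) → Fin r → ZMod q) → ℝ),
      (∀ i x, 0 ≤ f i x ∧ f i x ≤ 1) →
      (∀ i x x', (∀ j, j ≠ i → x j = x' j) → f i x = f i x') →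
      ∀ w : Fin r → ZMod q,
      ‖𝔼 y : Fin (m+1) → Fin r → ZMod q,
          (∏ i, (f i y : ℂ)) * χ (∑ j, w j * ∏ i, y i j)‖ ^ (2^m)
        ≤ ∏ j, Dfun q m (w j))
    (f : Fin (m+2) → (Fin (m+2) → Fin r → ZMod q) → ℝ)
    (hval : ∀ i x, 0 ≤ f i x ∧ f i x ≤ 1)
    (hcyl : ∀ i x x', (∀ j, j ≠ i → x j = x' j) → f i x = f i x')
    (w : Fin r → ZMod q) :
    ‖𝔼 x : Fin (m+2) → Fin r → ZMod q,
        (∏ i, (f i x : ℂ)) * χ (∑ j, w j * ∏ i, x i j)‖ ^ (2^(m+1))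
      ≤ ∏ j, Dfun q (m+1) (w j) := by
  -- the inner function after splitting off the first variable
  set g : (Fin r → ZMod q) → (Fin (m+1) → Fin r → ZMod q) → ℂ :=
    fun a y => (∏ i : Fin (m+1), ((f i.succ (Fin.cons a y : Fin (m+2) → Fin r → ZMod q) : ℝ) : ℂ)) *
      χ (∑ j, w j * (a j * ∏ i, y i j)) with hg
  set h : (Fin (m+1) → Fin r → ZMod q) → ℝ := fun y => f 0 (Fin.cons 0 y : Fin (m+2) → Fin r → ZMod q) with hh
  -- Step 1: reindex
  have h1 : (𝔼 x : Fin (m+2) → Fin r → ZMod q,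
        (∏ i, (f i x : ℂ)) * χ (∑ j, w j * ∏ i, x i j))
      = 𝔼 a : Fin r → ZMod q, 𝔼 y : Fin (m+1) → Fin r → ZMod q,
          ((h y : ℝ) : ℂ) * g a y := by
    rw [Fintype.expect_equiv ((Fin.consEquiv (fun _ : Fin (m+2) => Fin r → ZMod q)).symm)
      _ (fun p => (∏ i, (f i (Fin.cons p.1 p.2 : Fin (m+2) → Fin r → ZMod q) : ℂ)) *
          χ (∑ j, w j * ∏ i, (Fin.cons p.1 p.2 : Fin (m+2) → Fin r → ZMod q) i j))
      (fun x => by simp only [Fin.consEquiv_symm_apply, Fin.cons_self_tail])]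
    rw [expect_prod_type]
    refine Finset.expect_congr rfl fun a _ => Finset.expect_congr rfl fun y _ => ?_
    have hf0 : f 0 (Fin.cons a y : Fin (m+2) → Fin r → ZMod q) = h y := by
      refine hcyl 0 _ _ fun j hj => ?_
      obtain ⟨i, rfl⟩ := Fin.eq_succ_of_ne_zero hj
      simp [Fin.cons_succ]
    have hph : (∑ j, w j * ∏ i, (Fin.cons a y : Fin (m+2) → Fin r → ZMod q) i j)
        = ∑ j, w j * (a j * ∏ i : Fin (m+1), y i j) := by
      refine Finset.sum_congr rfl fun j _ => ?_
      rw [Fin.prod_univ_succ]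
      simp [Fin.cons_succ, Fin.cons_zero]
    rw [Fin.prod_univ_succ, hph, hf0]
    simp only [hg]
    push_cast
    ring_nf
  rw [h1]
  have hh01 : ∀ y, 0 ≤ h y ∧ h y ≤ 1 := fun y => hval 0 _
  have c2 := cs_step h hh01 g
  -- Step 3: apply inductive hypothesis after computing the conjugate product
  have step3 : ∀ a a' : Fin r → ZMod q,
      ‖𝔼 y : Fin (m+1) → Fin r → ZMod q, g a y * (starRingEnd ℂ) (g a' y)‖ ^ (2^m)
        ≤ ∏ j, Dfun q m (w j * (a j - a' j)) := by
    intro a a'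
    have hid : ∀ y : Fin (m+1) → Fin r → ZMod q, g a y * (starRingEnd ℂ) (g a' y)
        = (∏ i : Fin (m+1),
            (((f i.succ (Fin.cons a y : Fin (m+2) → Fin r → ZMod q) *
               f i.succ (Fin.cons a' y : Fin (m+2) → Fin r → ZMod q) : ℝ)) : ℂ))
          * χ (∑ j, (w j * (a j - a' j)) * ∏ i : Fin (m+1), y i j) := by
      intro y
      rw [hg]
      simp only [map_mul, map_prod, Complex.conj_ofReal, ← AddChar.map_neg_eq_conj]
      rw [mul_mul_mul_comm, ← Finset.prod_mul_distrib, ← AddChar.map_add_eq_mul]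
      have hphase : (∑ j, w j * (a j * ∏ i : Fin (m+1), y i j)) +
          -(∑ j, w j * (a' j * ∏ i : Fin (m+1), y i j))
          = ∑ j, (w j * (a j - a' j)) * ∏ i : Fin (m+1), y i j := by
        rw [← Finset.sum_neg_distrib, ← Finset.sum_add_distrib]
        exact Finset.sum_congr rfl fun j _ => by ring
      rw [hphase]
      norm_cast
    rw [Finset.expect_congr rfl fun y _ => hid y]
    exact ih
      (fun i y => f i.succ (Fin.cons a y : Fin (m+2) → Fin r → ZMod q) *
        f i.succ (Fin.cons a' y : Fin (m+2) → Fin r → ZMod q))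
      (fun i y => by
        obtain ⟨u1, u2⟩ := hval i.succ (Fin.cons a y : Fin (m+2) → Fin r → ZMod q)
        obtain ⟨v1, v2⟩ := hval i.succ (Fin.cons a' y : Fin (m+2) → Fin r → ZMod q)
        constructor
        · exact mul_nonneg u1 v1
        · exact one_mul (1:ℝ) ▸ mul_le_mul u2 v2 v1 zero_le_one)
      (fun i y y' hyy => by
        have key : ∀ b : Fin r → ZMod q,
            f i.succ (Fin.cons b y : Fin (m+2) → Fin r → ZMod q)
              = f i.succ (Fin.cons b y' : Fin (m+2) → Fin r → ZMod q) := by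
          intro b
          refine hcyl i.succ _ _ fun j hj => ?_
          induction j using Fin.cases with
          | zero => simp
          | succ l =>
            have hl : l ≠ i := fun hli => hj (by rw [hli])
            simp [Fin.cons_succ, hyy l hl]
        rw [key a, key a'])
      (fun j => w j * (a j - a' j))
  -- Step 4: factor the expectation over pairs through the coordinates
  have step4 : (𝔼 a : Fin r → ZMod q, 𝔼 a' : Fin r → ZMod q,
        ∏ j, Dfun q m (w j * (a j - a' j)))
      = ∏ j, Dfun q (m+1) (w j) := by
    calc (𝔼 a : Fin r → ZMod q, 𝔼 a' : Fin r → ZMod q, ∏ j, Dfun q m (w j * (a j - a' j)))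
        = 𝔼 p : (Fin r → ZMod q) × (Fin r → ZMod q),
            ∏ j, Dfun q m (w j * (p.1 j - p.2 j)) :=
          (expect_prod_type (fun p : (Fin r → ZMod q) × (Fin r → ZMod q) =>
            ∏ j, Dfun q m (w j * (p.1 j - p.2 j)))).symm
      _ = 𝔼 z : Fin r → ZMod q × ZMod q, ∏ j, Dfun q m (w j * ((z j).1 - (z j).2)) :=
          Fintype.expect_equiv
            ((Equiv.arrowProdEquivProdArrow (Fin r) (fun _ => ZMod q) (fun _ => ZMod q)).symm) _ _ (fun p => rfl)
      _ = ∏ j, 𝔼 z : ZMod q × ZMod q, Dfun q m (w j * (z.1 - z.2)) :=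
          expect_pi_prod (fun j (z : ZMod q × ZMod q) => Dfun q m (w j * (z.1 - z.2)))
      _ = ∏ j, Dfun q (m+1) (w j) := rfl
  -- Step 5: put everything together
  have hne : (2:ℕ)^m ≠ 0 := (pow_pos (by norm_num) m).ne'
  calc ‖𝔼 a : Fin r → ZMod q, 𝔼 y : Fin (m+1) → Fin r → ZMod q,
        ((h y : ℝ) : ℂ) * g a y‖ ^ (2^(m+1))
      = (‖𝔼 a : Fin r → ZMod q, 𝔼 y : Fin (m+1) → Fin r → ZMod q,
          ((h y : ℝ) : ℂ) * g a y‖ ^ 2) ^ (2^m) := by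
        rw [← pow_mul, pow_succ, mul_comm]
    _ ≤ (𝔼 a : Fin r → ZMod q, 𝔼 a' : Fin r → ZMod q,
          ‖𝔼 y : Fin (m+1) → Fin r → ZMod q, g a y * (starRingEnd ℂ) (g a' y)‖) ^ (2^m) :=
        pow_le_pow_left₀ (sq_nonneg _) c2 _
    _ ≤ 𝔼 a : Fin r → ZMod q, (𝔼 a' : Fin r → ZMod q,
          ‖𝔼 y : Fin (m+1) → Fin r → ZMod q, g a y * (starRingEnd ℂ) (g a' y)‖) ^ (2^m) :=
        expect_pow_le' (fun a => Finset.expect_nonneg fun _ _ => norm_nonneg _) hne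
    _ ≤ 𝔼 a : Fin r → ZMod q, 𝔼 a' : Fin r → ZMod q,
          ‖𝔼 y : Fin (m+1) → Fin r → ZMod q, g a y * (starRingEnd ℂ) (g a' y)‖ ^ (2^m) :=
        Finset.expect_le_expect fun a _ =>
          expect_pow_le' (fun a' => norm_nonneg _) hne
    _ ≤ 𝔼 a : Fin r → ZMod q, 𝔼 a' : Fin r → ZMod q,
          ∏ j, Dfun q m (w j * (a j - a' j)) :=
        Finset.expect_le_expect fun a _ => Finset.expect_le_expect fun a' _ => step3 a a'
    _ = ∏ j, Dfun q (m+1) (w j) := step4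


lemma key_lemma (χ : AddChar (ZMod q) ℂ) (hχ : χ ≠ 1) (m : ℕ) :
    ∀ (f : Fin (m+1) → (Fin (m+1) → Fin r → ZMod q) → ℝ),
      (∀ i x, 0 ≤ f i x ∧ f i x ≤ 1) →
      (∀ i x x', (∀ j, j ≠ i → x j = x' j) → f i x = f i x') →
      ∀ w : Fin r → ZMod q,
      ‖𝔼 y : Fin (m+1) → Fin r → ZMod q,
          (∏ i, (f i y : ℂ)) * χ (∑ j, w j * ∏ i, y i j)‖ ^ (2^m)
        ≤ ∏ j, Dfun q m (w j) := by
  induction m with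
  | zero => exact fun f hval hcyl w => key_base χ hχ f hval hcyl w
  | succ m ih => exact fun f hval hcyl w => key_step χ m ih f hval hcyl w

end

/-- The generalized inner product over `F_q`. -/
def GIP {q r k : ℕ} (x : Fin k → Fin r → ZMod q) : ZMod q := ∑ j, ∏ i, x i j

theorem stmt_6 (q k r : ℕ) [Fact q.Prime] [NeZero q] (hk : 2 ≤ k) (hr : 2^(k+1) ≤ r)
    (χ : AddChar (ZMod q) ℂ) (hχ : χ ≠ 1)
    (f : Fin k → (Fin k → Fin r → ZMod q) → ℝ)
    (hval : ∀ i x, f i x = 0 ∨ f i x = 1)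
    (hcyl : ∀ i x x', (∀ j, j ≠ i → x j = x' j) → f i x = f i x') :
    (‖(Fintype.card (Fin k → Fin r → ZMod q) : ℂ)⁻¹ *
      ∑ x : Fin k → Fin r → ZMod q, (∏ i, (f i x : ℂ)) * χ (GIP x)‖) ^ (2^(k-1)) ≤
      ((2*k : ℝ)/q) ^ r := by
  obtain ⟨m, rfl⟩ : ∃ m, k = m + 1 := ⟨k - 1, by omega⟩
  haveI : Fact (1 < q) := ⟨(Fact.out (p := q.Prime)).one_lt⟩
  have hval' : ∀ i x, 0 ≤ f i x ∧ f i x ≤ 1 := by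
    intro i x
    rcases hval i x with h | h <;> simp [h]
  have hq : (0:ℝ) < q := by
    have := (Fact.out (p := q.Prime)).pos
    exact_mod_cast this
  have hkey := key_lemma χ hχ m f hval' hcyl (fun _ => (1 : ZMod q))
  have hGIP : ∀ x : Fin (m+1) → Fin r → ZMod q,
      χ (GIP x) = χ (∑ j, (1 : ZMod q) * ∏ i, x i j) := by
    intro x
    simp [GIP]
  have hconv : (‖(Fintype.card (Fin (m+1) → Fin r → ZMod q) : ℂ)⁻¹ *
        ∑ x : Fin (m+1) → Fin r → ZMod q, (∏ i, (f i x : ℂ)) * χ (GIP x)‖)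
      = ‖𝔼 x : Fin (m+1) → Fin r → ZMod q,
          (∏ i, (f i x : ℂ)) * χ (∑ j, (1 : ZMod q) * ∏ i, x i j)‖ := by
    rw [inv_mul_eq_div, ← Fintype.expect_eq_sum_div_card]
    congr 1
    exact Finset.expect_congr rfl fun x _ => by rw [hGIP x]
  rw [hconv]
  simp only [Nat.add_sub_cancel]
  refine hkey.trans ?_
  have hD : Dfun q m (1 : ZMod q) ≤ (2*((m:ℝ)+1))/q := by
    refine (Dfun_le q m 1 one_ne_zero).trans ?_
    gcongr
    linarith
  calc ∏ _j : Fin r, Dfun q m (1 : ZMod q)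
      ≤ ∏ _j : Fin r, (2*((m:ℝ)+1))/q :=
        Finset.prod_le_prod (fun j _ => Dfun_nonneg q m _) (fun j _ => hD)
    _ = ((2*((m:ℝ)+1))/q) ^ r := by rw [Finset.prod_const, Finset.card_univ, Fintype.card_fin]
    _ = ((2*((m+1 : ℕ)) : ℝ)/q) ^ r := by norm_num
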